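/- If a sequence of atoms α₁⋯αₙ is right-reduced (for all i, α_{i+1} does not absorb α_i), then the subsequence obtained by the left-reduction procedure — keeping each atom after the first alphabet atom only if it is not absorbed by the most recently kept alphabet atom — is still right-reduced. -/

import Mathlib

def IsDirectedLang {A : Type*} (L : Set (List A)) : Prop :=
  ∀ u ∈ L, ∀ v ∈ L, ∃ w ∈ L, u.Sublist w ∧ v.Sublist w

def dcl {A : Type*} (L : Set (List A)) : Set (List A) := {u | ∃ v ∈ L, u.Sublist v}

def DownwardClosed {A : Type*} (D : Set (List A)) : Prop :=
  ∀ u v : List A, u.Sublist v → v ∈ D → u ∈ D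

def IsIdeal {A : Type*} (I : Set (List A)) : Prop :=
  I.Nonempty ∧ DownwardClosed I ∧ IsDirectedLang I

inductive Atom (A : Type*) where
  | single : A → Atom A
  | alph : Finset A → Atom A

def Atom.lang {A : Type*} : Atom A → Set (List A)
  | .single a => {[], [a]}
  | .alph d => {w | ∀ c ∈ w, c ∈ d}

def Atom.Valid {A : Type*} : Atom A → Prop
  | .single _ => True
  | .alph d => d.Nonempty

def conc {A : Type*} (L M : Set (List A)) : Set (List A) :=
  {w | ∃ u ∈ L, ∃ v ∈ M, w = u ++ v}

def Idl {A : Type*} : List (Atom A) → Set (List A)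
  | [] => {[]}
  | α :: r => conc α.lang (Idl r)

def LeftAbsorbs {A : Type*} (α β : Atom A) : Prop := Idl [α, β] = Idl [α]
def RightAbsorbs {A : Type*} (α β : Atom A) : Prop := Idl [α, β] = Idl [β]
def Absorptive {A : Type*} (α β : Atom A) : Prop := LeftAbsorbs α β ∨ RightAbsorbs α β
def Reduced {A : Type*} (r : List (Atom A)) : Prop := r.Chain' fun α β => ¬ Absorptive α β

def atomWeight {A : Type*} (k : ℕ) : Atom A → ℕ
  | .single _ => 1
  | .alph d => (k+1) ^ d.card

def repWeight {A : Type*} (k : ℕ) (r : List (Atom A)) : ℕ := (r.map (atomWeight k)).sum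

open Classical in
noncomputable def lredGo {A : Type*} : Atom A → List (Atom A) → List (Atom A)
  | _, [] => []
  | prev, β :: r => if LeftAbsorbs prev β then lredGo prev r else β :: lredGo β r

noncomputable def lred {A : Type*} : List (Atom A) → List (Atom A)
  | [] => []
  | α :: r => α :: lredGo α r

def RightReduced {A : Type*} (r : List (Atom A)) : Prop :=
  r.Chain' fun α β => ¬ RightAbsorbs α β

lemma nil_mem_lang {A : Type*} (α : Atom A) : [] ∈ α.lang := by
  cases α <;> simp [Atom.lang]

lemma mem_Idl_one {A : Type*} {α : Atom A} {w : List A} :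
    w ∈ Idl [α] ↔ w ∈ α.lang := by
  simp [Idl, conc]

lemma mem_Idl_two {A : Type*} {α β : Atom A} {w : List A} :
    w ∈ Idl [α, β] ↔ ∃ u ∈ α.lang, ∃ v ∈ β.lang, w = u ++ v := by
  simp [Idl, conc]

lemma key {A : Type*} {α β γ : Atom A} (hLA : LeftAbsorbs α β)
    (hRA : RightAbsorbs α γ) : RightAbsorbs β γ := by
  rw [LeftAbsorbs, Set.ext_iff] at hLA
  rw [RightAbsorbs, Set.ext_iff] at hRA
  have hβα : β.lang ⊆ α.lang := by
    intro v hv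
    have := (hLA v).mp (mem_Idl_two.mpr ⟨[], nil_mem_lang α, v, hv, by simp⟩)
    exact mem_Idl_one.mp this
  rw [RightAbsorbs, Set.ext_iff]
  intro w
  rw [mem_Idl_two, mem_Idl_one]
  constructor
  · rintro ⟨u, hu, v, hv, rfl⟩
    exact mem_Idl_one.mp ((hRA _).mp (mem_Idl_two.mpr ⟨u, hβα hu, v, hv, rfl⟩))
  · intro hw
    exact ⟨[], nil_mem_lang β, w, hw, by simp⟩

lemma go_chain {A : Type*} : ∀ (r : List (Atom A)) (prev : Atom A),
    (prev :: r).Chain' (fun α β => ¬ RightAbsorbs α β) →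
    (prev :: lredGo prev r).Chain' (fun α β => ¬ RightAbsorbs α β)
  | [], prev, _ => by simp [lredGo]; exact List.isChain_singleton _
  | β :: t, prev, h => by
    simp only [List.Chain', List.isChain_cons_cons] at h
    obtain ⟨h1, h2⟩ := h
    by_cases hLA : LeftAbsorbs prev β
    · rw [lredGo, if_pos hLA]
      apply go_chain t prev
      cases t with
      | nil => exact List.isChain_singleton _
      | cons γ t' =>
        simp only [List.Chain', List.isChain_cons_cons] at h2 ⊢
        exact ⟨fun hra => h2.1 (key hLA hra), h2.2⟩
    · rw [lredGo, if_neg hLA]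
      simp only [List.Chain', List.isChain_cons_cons]
      exact ⟨h1, go_chain t β h2⟩

theorem lred_preserves_rightReduced {A : Type*} (r : List (Atom A))
    (hr : ∀ α ∈ r, α.Valid) (h : RightReduced r) :
    RightReduced (lred r) := by
  cases r with
  | nil => simp [lred, RightReduced]; exact List.isChain_nil
  | cons α t => exact go_chain t α h
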